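/- There exists an absolute constant C > 0 such that for every twice continuously differentiable compactly supported v : ℝ³ → ℝ³, ∫_{ℝ³} |∇v|⁴ dx ≤ C ∫_{ℝ³} |v|² |∇²v|² dx. -/

import Mathlib

open MeasureTheory

noncomputable section

/-- Euclidean three-space. -/
abbrev E3 := EuclideanSpace ℝ (Fin 3)

/-- The j-th partial derivative of a scalar function on ℝ³. -/
def pder (j : Fin 3) (f : E3 → ℝ) : E3 → ℝ :=
  fun x => fderiv ℝ f x (EuclideanSpace.single j 1)

/-- |∇v|², the squared Euclidean norm of the gradient of v : ℝ³ → ℝ³. -/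
def grad2 (v : E3 → E3) (x : E3) : ℝ :=
  ∑ i : Fin 3, ∑ j : Fin 3, (pder j (fun y => v y i) x) ^ 2

/-- |∇²v|², the squared norm of the second derivatives of v : ℝ³ → ℝ³. -/
def hess2 (v : E3 → E3) (x : E3) : ℝ :=
  ∑ i : Fin 3, ∑ j : Fin 3, ∑ k : Fin 3, (pder k (pder j (fun y => v y i)) x) ^ 2

/-- |∇³v|², the squared norm of the third derivatives of v : ℝ³ → ℝ³. -/
def third2 (v : E3 → E3) (x : E3) : ℝ :=
  ∑ i : Fin 3, ∑ j : Fin 3, ∑ k : Fin 3, ∑ l : Fin 3,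
    (pder l (pder k (pder j (fun y => v y i))) x) ^ 2

namespace GFPB

lemma contDiff_pder {n m : WithTop ℕ∞} {f : E3 → ℝ} (hf : ContDiff ℝ n f) (h : m + 1 ≤ n)
    (j : Fin 3) : ContDiff ℝ m (pder j f) := by
  have h2 := (ContinuousLinearMap.apply ℝ ℝ (EuclideanSpace.single j 1)).contDiff.comp
    (hf.fderiv_right (m := m) h)
  exact h2

lemma hcs_pder {f : E3 → ℝ} (hf : HasCompactSupport f) (j : Fin 3) :
    HasCompactSupport (pder j f) :=
  hf.fderiv_apply ℝ (EuclideanSpace.single j 1)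

def W (v : E3 → E3) (i : Fin 3) : E3 → ℝ := fun y => v y i
def P (v : E3 → E3) (i j : Fin 3) : E3 → ℝ := pder j (W v i)
def Q (v : E3 → E3) (i j k : Fin 3) : E3 → ℝ := pder k (P v i j)

variable {v : E3 → E3}

lemma grad2_eq (x : E3) : grad2 v x = ∑ i : Fin 3, ∑ j : Fin 3, (P v i j x) ^ 2 := rfl

lemma hess2_eq (x : E3) :
    hess2 v x = ∑ i : Fin 3, ∑ j : Fin 3, ∑ k : Fin 3, (Q v i j k x) ^ 2 := rfl

lemma contDiff_W (hv : ContDiff ℝ 2 v) (i : Fin 3) : ContDiff ℝ 2 (W v i) :=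
  (EuclideanSpace.proj i : E3 →L[ℝ] ℝ).contDiff.comp hv

lemma contDiff_P (hv : ContDiff ℝ 2 v) (i j : Fin 3) : ContDiff ℝ 1 (P v i j) :=
  contDiff_pder (contDiff_W hv i) (by norm_num) j

lemma continuous_Q (hv : ContDiff ℝ 2 v) (i j k : Fin 3) : Continuous (Q v i j k) :=
  (contDiff_pder (m := 0) (contDiff_P hv i j) (by norm_num) k).continuous

lemma hcs_W (hvs : HasCompactSupport v) (i : Fin 3) : HasCompactSupport (W v i) :=
  hvs.comp_left (g := fun u : E3 => u i) rfl

lemma hcs_P (hvs : HasCompactSupport v) (i j : Fin 3) : HasCompactSupport (P v i j) :=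
  hcs_pder (hcs_W hvs i) j

lemma hcs_Q (hvs : HasCompactSupport v) (i j k : Fin 3) : HasCompactSupport (Q v i j k) :=
  hcs_pder (hcs_P hvs i j) k

lemma contDiff_grad2 (hv : ContDiff ℝ 2 v) : ContDiff ℝ 1 (grad2 v) := by
  have h2 : ContDiff ℝ 1 (fun x => ∑ i : Fin 3, ∑ j : Fin 3, (P v i j x) ^ 2) := by
    apply ContDiff.sum; intro i _; apply ContDiff.sum; intro j _
    exact (contDiff_P hv i j).pow 2
  exact h2

lemma continuous_hess2 (hv : ContDiff ℝ 2 v) : Continuous (hess2 v) := by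
  have h2 : Continuous (fun x => ∑ i : Fin 3, ∑ j : Fin 3, ∑ k : Fin 3, (Q v i j k x) ^ 2) := by
    apply continuous_finset_sum; intro i _; apply continuous_finset_sum; intro j _
    apply continuous_finset_sum; intro k _
    exact (continuous_Q hv i j k).pow 2
  exact h2


lemma pder_mul {f g : E3 → ℝ} (j : Fin 3) (x : E3) (hf : DifferentiableAt ℝ f x)
    (hg : DifferentiableAt ℝ g x) :
    pder j (fun y => f y * g y) x = pder j f x * g x + f x * pder j g x := by
  simp only [pder, fderiv_fun_mul hf hg]
  simp only [ContinuousLinearMap.add_apply, ContinuousLinearMap.smul_apply, smul_eq_mul]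
  ring

lemma pder_sum {ι : Type*} (s : Finset ι) (F : ι → E3 → ℝ) (j : Fin 3) (x : E3)
    (hF : ∀ i ∈ s, DifferentiableAt ℝ (F i) x) :
    pder j (fun y => ∑ i ∈ s, F i y) x = ∑ i ∈ s, pder j (F i) x := by
  simp only [pder]
  rw [fderiv_fun_sum hF]
  simp

lemma pder_sq {f : E3 → ℝ} (j : Fin 3) (x : E3) (hf : DifferentiableAt ℝ f x) :
    pder j (fun y => f y ^ 2) x = 2 * f x * pder j f x := by
  have h2 : (fun y => f y ^ 2) = fun y => f y * f y := by ext y; ring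
  rw [h2, pder_mul j x hf hf]; ring

lemma hcs_sum {ι : Type*} (s : Finset ι) (F : ι → E3 → ℝ)
    (h : ∀ i ∈ s, HasCompactSupport (F i)) :
    HasCompactSupport (fun x => ∑ i ∈ s, F i x) := by
  classical
  induction s using Finset.induction with
  | empty => simp only [Finset.sum_empty]; exact HasCompactSupport.zero
  | @insert a s' ha ih =>
    simp only [Finset.sum_insert ha]
    exact (h a (by simp)).add (ih fun i hi => h i (Finset.mem_insert_of_mem hi))

lemma amgm (u t : ℝ) : |u * t| ≤ (1/342) * u ^ 2 + (171/2) * t ^ 2 := by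
  rcases abs_cases (u * t) with ⟨h, _⟩ | ⟨h, _⟩ <;>
    nlinarith [sq_nonneg (u/171 - t), sq_nonneg (u/171 + t)]

lemma hcs_grad2 (hvs : HasCompactSupport v) : HasCompactSupport (grad2 v) := by
  apply hcs_sum; intro i _; apply hcs_sum; intro j _
  exact (hcs_P hvs i j).comp_left (g := fun t : ℝ => t ^ 2) (by simp)

lemma pder_grad2 (hv : ContDiff ℝ 2 v) (j : Fin 3) (x : E3) :
    pder j (grad2 v) x = ∑ i : Fin 3, ∑ k : Fin 3, 2 * P v i k x * Q v i k j x := by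
  have hPd : ∀ i k, DifferentiableAt ℝ (P v i k) x :=
    fun i k => ((contDiff_P hv i k).differentiable one_ne_zero).differentiableAt
  have h0 : grad2 v = fun y => ∑ i : Fin 3, (fun y => ∑ k : Fin 3, (P v i k y) ^ 2) y := rfl
  rw [h0, pder_sum]
  · refine Finset.sum_congr rfl fun i _ => ?_
    rw [pder_sum]
    · exact Finset.sum_congr rfl fun k _ => by rw [pder_sq j x (hPd i k)]; unfold Q; ring
    · exact fun k _ => ((hPd i k).pow 2)
  · intro i _
    exact DifferentiableAt.fun_sum fun k _ => ((hPd i k).pow 2)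

lemma grad2_nonneg (x : E3) : 0 ≤ grad2 v x := by
  rw [grad2_eq]; positivity

lemma hess2_nonneg (x : E3) : 0 ≤ hess2 v x := by
  rw [hess2_eq]; positivity

lemma sq_W_le (x : E3) (i : Fin 3) : (W v i x) ^ 2 ≤ ‖v x‖ ^ 2 := by
  rw [EuclideanSpace.norm_eq, Real.sq_sqrt (by positivity)]
  have h2 : (W v i x) ^ 2 = ‖v x i‖ ^ 2 := by
    rw [Real.norm_eq_abs, sq_abs]; rfl
  rw [h2]
  exact Finset.single_le_sum (f := fun i => ‖v x i‖ ^ 2) (fun k _ => by positivity) (Finset.mem_univ i)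

lemma sq_P_le (x : E3) (i j : Fin 3) : (P v i j x) ^ 2 ≤ grad2 v x := by
  rw [grad2_eq]
  calc (P v i j x) ^ 2 ≤ ∑ k : Fin 3, (P v i k x) ^ 2 :=
        Finset.single_le_sum (f := fun k => (P v i k x) ^ 2) (fun k _ => sq_nonneg _)
          (Finset.mem_univ j)
    _ ≤ _ := Finset.single_le_sum (f := fun i => ∑ k : Fin 3, (P v i k x) ^ 2)
          (fun k _ => Finset.sum_nonneg fun _ _ => sq_nonneg _) (Finset.mem_univ i)

lemma sq_Q_le (x : E3) (i j k : Fin 3) : (Q v i j k x) ^ 2 ≤ hess2 v x := by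
  rw [hess2_eq]
  calc (Q v i j k x) ^ 2 ≤ ∑ l : Fin 3, (Q v i j l x) ^ 2 :=
        Finset.single_le_sum (f := fun l => (Q v i j l x) ^ 2) (fun l _ => sq_nonneg _)
          (Finset.mem_univ k)
    _ ≤ ∑ m : Fin 3, ∑ l : Fin 3, (Q v i m l x) ^ 2 :=
        Finset.single_le_sum (f := fun m => ∑ l : Fin 3, (Q v i m l x) ^ 2)
          (fun m _ => Finset.sum_nonneg fun _ _ => sq_nonneg _) (Finset.mem_univ j)
    _ ≤ _ := Finset.single_le_sum (f := fun i' => ∑ m : Fin 3, ∑ l : Fin 3, (Q v i' m l x) ^ 2)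
          (fun i' _ => Finset.sum_nonneg fun _ _ => Finset.sum_nonneg fun _ _ => sq_nonneg _)
          (Finset.mem_univ i)


lemma integrable_cc {f : E3 → ℝ} (hf : Continuous f) (hcs : HasCompactSupport f) :
    Integrable f :=
  hf.integrable_of_hasCompactSupport hcs

lemma ibp (hv : ContDiff ℝ 2 v) (hvs : HasCompactSupport v) (i j : Fin 3) :
    ∫ x, (P v i j x) ^ 2 * grad2 v x
      = -(∫ x, W v i x * Q v i j j x * grad2 v x)
        - ∫ x, W v i x * P v i j x * pder j (grad2 v) x := by
  set ee : E3 := EuclideanSpace.single j 1 with hee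
  set f : E3 → ℝ := fun x => W v i x * grad2 v x with hf_def
  have hW1 : ContDiff ℝ 1 (W v i) := (contDiff_W hv i).of_le (by norm_num)
  have hg1 : ContDiff ℝ 1 (grad2 v) := contDiff_grad2 hv
  have hgc : Continuous (grad2 v) := hg1.continuous
  have hgd : Differentiable ℝ (grad2 v) := hg1.differentiable one_ne_zero
  have hf1 : ContDiff ℝ 1 f := hW1.mul hg1
  have hfd : Differentiable ℝ f := hf1.differentiable one_ne_zero
  have hfcs : HasCompactSupport f := (hcs_W hvs i).mul_right
  have hPcont : Continuous (P v i j) := (contDiff_P hv i j).continuous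
  have hPd : Differentiable ℝ (P v i j) := (contDiff_P hv i j).differentiable one_ne_zero
  have hQcont : Continuous (Q v i j j) := continuous_Q hv i j j
  have hpfc : Continuous (pder j f) := (contDiff_pder (m := 0) hf1 (by norm_num) j).continuous
  have hpgc : Continuous (pder j (grad2 v)) :=
    (contDiff_pder (m := 0) hg1 (by norm_num) j).continuous
  have hgcs : HasCompactSupport (grad2 v) := hcs_grad2 hvs
  have h1 : Integrable (fun x => fderiv ℝ f x ee * P v i j x) :=
    integrable_cc (hpfc.mul hPcont) ((hcs_pder hfcs j).mul_right)
  have h2 : Integrable (fun x => f x * fderiv ℝ (P v i j) x ee) :=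
    integrable_cc (hf1.continuous.mul hQcont) (hfcs.mul_right)
  have h3 : Integrable (fun x => f x * P v i j x) :=
    integrable_cc (hf1.continuous.mul hPcont) (hfcs.mul_right)
  have key := integral_mul_fderiv_eq_neg_fderiv_mul_of_integrable h1 h2 h3 (fun x _ => hfd x) (fun x _ => hPd x)
  have l1 : ∀ x, f x * fderiv ℝ (P v i j) x ee = W v i x * Q v i j j x * grad2 v x := by
    intro x
    show (W v i x * grad2 v x) * Q v i j j x = _
    ring
  have l2 : ∀ x, fderiv ℝ f x ee * P v i j x
      = (P v i j x) ^ 2 * grad2 v x + W v i x * P v i j x * pder j (grad2 v) x := by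
    intro x
    have hm := pder_mul (f := W v i) (g := grad2 v) j x
      ((hW1.differentiable one_ne_zero) x) (hgd x)
    show pder j f x * P v i j x = _
    rw [hf_def, hm]
    unfold P
    ring
  simp only [l1, l2] at key
  have hA : Integrable (fun x => (P v i j x) ^ 2 * grad2 v x) :=
    integrable_cc ((hPcont.pow 2).mul hgc) (hgcs.mul_left)
  have hB : Integrable (fun x => W v i x * P v i j x * pder j (grad2 v) x) :=
    integrable_cc (((contDiff_W hv i).continuous.mul hPcont).mul hpgc)
      ((hcs_pder hgcs j).mul_left)
  rw [integral_add hA hB] at key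
  have key' : ∫ x, W v i x * Q v i j j x * grad2 v x
      = -((∫ a, P v i j a ^ 2 * grad2 v a) + ∫ a, W v i a * P v i j a * pder j (grad2 v) a) :=
    key
  rw [key']
  ring


theorem main :
    ∃ C : ℝ, 0 < C ∧ ∀ v : E3 → E3, ContDiff ℝ 2 v → HasCompactSupport v →
      ∫ x, (grad2 v x) ^ 2 ≤ C * ∫ x, ‖v x‖ ^ 2 * hess2 v x := by
  refine ⟨29241, by norm_num, fun v hv hvs => ?_⟩
  have hgc : Continuous (grad2 v) := (contDiff_grad2 hv).continuous
  have hgcs : HasCompactSupport (grad2 v) := hcs_grad2 hvs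
  have hhc : Continuous (hess2 v) := continuous_hess2 hv
  have hPcont : ∀ i j, Continuous (P v i j) := fun i j => (contDiff_P hv i j).continuous
  have hWcont : ∀ i, Continuous (W v i) := fun i => (contDiff_W hv i).continuous
  have hQcont := continuous_Q hv
  have hpgc : ∀ j, Continuous (pder j (grad2 v)) :=
    fun j => (contDiff_pder (m := 0) (contDiff_grad2 hv) (by norm_num) j).continuous
  have ig2 : Integrable (fun x => grad2 v x ^ 2) :=
    integrable_cc (hgc.pow 2) (hgcs.comp_left (g := fun t : ℝ => t ^ 2) (by simp))
  have hvn_cs : HasCompactSupport (fun y => ‖v y‖ ^ 2) :=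
    hvs.comp_left (g := fun u : E3 => ‖u‖ ^ 2) (by simp)
  have ivh : Integrable (fun x => ‖v x‖ ^ 2 * hess2 v x) :=
    integrable_cc ((hv.continuous.norm.pow 2).mul hhc) (hvn_cs.mul_right)
  have hA : ∀ i j, Integrable (fun x => (P v i j x) ^ 2 * grad2 v x) :=
    fun i j => integrable_cc (((hPcont i j).pow 2).mul hgc) (hgcs.mul_left)
  have hT1 : ∀ i j, Integrable (fun x => W v i x * Q v i j j x * grad2 v x) :=
    fun i j => integrable_cc (((hWcont i).mul (hQcont i j j)).mul hgc) (hgcs.mul_left)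
  have hT2 : ∀ i j, Integrable (fun x => W v i x * P v i j x * pder j (grad2 v) x) :=
    fun i j => integrable_cc (((hWcont i).mul (hPcont i j)).mul (hpgc j))
      ((hcs_pder hgcs j).mul_left)
  set I1 : ℝ := ∫ x, grad2 v x ^ 2 with hI1
  set I2 : ℝ := ∫ x, ‖v x‖ ^ 2 * hess2 v x with hI2
  -- pointwise bounds
  have hb1 : ∀ i j x, |W v i x * Q v i j j x * grad2 v x|
      ≤ (1/342) * grad2 v x ^ 2 + (171/2) * (‖v x‖ ^ 2 * hess2 v x) := by
    intro i j x
    have ha := amgm (grad2 v x) (W v i x * Q v i j j x)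
    have e : W v i x * Q v i j j x * grad2 v x = grad2 v x * (W v i x * Q v i j j x) := by ring
    have h2 : (W v i x * Q v i j j x) ^ 2 ≤ ‖v x‖ ^ 2 * hess2 v x := by
      have hm := mul_le_mul (sq_W_le (v := v) x i) (sq_Q_le (v := v) x i j j) (sq_nonneg _)
        (by positivity : (0:ℝ) ≤ ‖v x‖ ^ 2)
      calc (W v i x * Q v i j j x) ^ 2 = (W v i x) ^ 2 * (Q v i j j x) ^ 2 := by ring
        _ ≤ _ := hm
    rw [e]
    linarith
  have hb2 : ∀ i j x, |W v i x * P v i j x * pder j (grad2 v) x|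
      ≤ (1/19) * grad2 v x ^ 2 + 1539 * (‖v x‖ ^ 2 * hess2 v x) := by
    intro i j x
    rw [pder_grad2 hv j x]
    have e : W v i x * P v i j x * (∑ i' : Fin 3, ∑ k : Fin 3, 2 * P v i' k x * Q v i' k j x)
        = ∑ i' : Fin 3, ∑ k : Fin 3,
            W v i x * P v i j x * (2 * P v i' k x * Q v i' k j x) := by
      simp only [Finset.mul_sum]
    rw [e]
    have hterm : ∀ i' k : Fin 3, |W v i x * P v i j x * (2 * P v i' k x * Q v i' k j x)|
        ≤ (1/171) * grad2 v x ^ 2 + 171 * (‖v x‖ ^ 2 * hess2 v x) := by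
      intro i' k
      have ha := amgm (P v i j x * P v i' k x) (W v i x * Q v i' k j x)
      have e2 : W v i x * P v i j x * (2 * P v i' k x * Q v i' k j x)
          = 2 * ((P v i j x * P v i' k x) * (W v i x * Q v i' k j x)) := by ring
      have hu : (P v i j x * P v i' k x) ^ 2 ≤ grad2 v x ^ 2 := by
        have hm := mul_le_mul (sq_P_le (v := v) x i j) (sq_P_le (v := v) x i' k) (sq_nonneg _) (grad2_nonneg (v := v) x)
        calc (P v i j x * P v i' k x) ^ 2 = (P v i j x) ^ 2 * (P v i' k x) ^ 2 := by ring
          _ ≤ grad2 v x * grad2 v x := hm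
          _ = grad2 v x ^ 2 := by ring
      have ht : (W v i x * Q v i' k j x) ^ 2 ≤ ‖v x‖ ^ 2 * hess2 v x := by
        have hm := mul_le_mul (sq_W_le (v := v) x i) (sq_Q_le (v := v) x i' k j) (sq_nonneg _)
          (by positivity : (0:ℝ) ≤ ‖v x‖ ^ 2)
        calc (W v i x * Q v i' k j x) ^ 2 = (W v i x) ^ 2 * (Q v i' k j x) ^ 2 := by ring
          _ ≤ _ := hm
      rw [e2, abs_mul, abs_two]
      linarith [abs_nonneg ((P v i j x * P v i' k x) * (W v i x * Q v i' k j x))]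
    calc |∑ i' : Fin 3, ∑ k : Fin 3, W v i x * P v i j x * (2 * P v i' k x * Q v i' k j x)|
        ≤ ∑ i' : Fin 3, |∑ k : Fin 3, W v i x * P v i j x * (2 * P v i' k x * Q v i' k j x)| :=
          Finset.abs_sum_le_sum_abs _ _
      _ ≤ ∑ i' : Fin 3, ∑ k : Fin 3,
            |W v i x * P v i j x * (2 * P v i' k x * Q v i' k j x)| :=
          Finset.sum_le_sum fun i' _ => Finset.abs_sum_le_sum_abs _ _
      _ ≤ ∑ _i' : Fin 3, ∑ _k : Fin 3,
            ((1/171) * grad2 v x ^ 2 + 171 * (‖v x‖ ^ 2 * hess2 v x)) :=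
          Finset.sum_le_sum fun i' _ => Finset.sum_le_sum fun k _ => hterm i' k
      _ = (1/19) * grad2 v x ^ 2 + 1539 * (‖v x‖ ^ 2 * hess2 v x) := by
          simp [Finset.sum_const, Finset.card_univ]
          ring
  -- integral bound per (i,j)
  have hIJ : ∀ i j : Fin 3,
      -(∫ x, W v i x * Q v i j j x * grad2 v x)
        - ∫ x, W v i x * P v i j x * pder j (grad2 v) x
      ≤ (1/18) * I1 + (3249/2) * I2 := by
    intro i j
    have hT1n : Integrable (fun x => -(W v i x * Q v i j j x * grad2 v x)) := (hT1 i j).neg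
    have hsum : -(∫ x, W v i x * Q v i j j x * grad2 v x)
        - ∫ x, W v i x * P v i j x * pder j (grad2 v) x
        = ∫ x, (-(W v i x * Q v i j j x * grad2 v x)
            - W v i x * P v i j x * pder j (grad2 v) x) := by
      rw [integral_sub hT1n (hT2 i j), integral_neg]
    rw [hsum]
    have hle : ∫ x, (-(W v i x * Q v i j j x * grad2 v x)
          - W v i x * P v i j x * pder j (grad2 v) x)
        ≤ ∫ x, ((1/18) * grad2 v x ^ 2 + (3249/2) * (‖v x‖ ^ 2 * hess2 v x)) := by
      apply integral_mono (hT1n.sub (hT2 i j))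
        ((ig2.const_mul _).add (ivh.const_mul _))
      intro x
      simp only [Pi.sub_apply, Pi.add_apply]
      have h1 := hb1 i j x
      have h2 := hb2 i j x
      have n1 := neg_abs_le (W v i x * Q v i j j x * grad2 v x)
      have n2 := neg_abs_le (W v i x * P v i j x * pder j (grad2 v) x)
      have n2' := le_abs_self (W v i x * P v i j x * pder j (grad2 v) x)
      linarith
    refine hle.trans ?_
    rw [integral_add (ig2.const_mul _) (ivh.const_mul _), integral_const_mul,
      integral_const_mul]
  -- assemble
  have e1 : ∀ x, grad2 v x ^ 2 = ∑ i : Fin 3, ∑ j : Fin 3, (P v i j x) ^ 2 * grad2 v x := by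
    intro x
    have e2 : ∑ i : Fin 3, ∑ j : Fin 3, (P v i j x) ^ 2 * grad2 v x
        = (∑ i : Fin 3, ∑ j : Fin 3, (P v i j x) ^ 2) * grad2 v x := by
      rw [Finset.sum_mul]
      exact Finset.sum_congr rfl fun i _ => (Finset.sum_mul _ _ _).symm
    rw [e2, ← grad2_eq, pow_two]
  have step1 : I1 = ∑ i : Fin 3, ∑ j : Fin 3, ∫ x, (P v i j x) ^ 2 * grad2 v x := by
    rw [hI1]
    calc ∫ x, grad2 v x ^ 2
        = ∫ x, ∑ i : Fin 3, ∑ j : Fin 3, (P v i j x) ^ 2 * grad2 v x := by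
          exact integral_congr_ae (Filter.Eventually.of_forall fun x => e1 x)
      _ = ∑ i : Fin 3, ∑ j : Fin 3, ∫ x, (P v i j x) ^ 2 * grad2 v x := by
          rw [integral_finset_sum _ fun i _ => integrable_finset_sum _ fun j _ => hA i j]
          exact Finset.sum_congr rfl fun i _ => integral_finset_sum _ fun j _ => hA i j
  have step2 : I1 ≤ ∑ _i : Fin 3, ∑ _j : Fin 3, ((1/18) * I1 + (3249/2) * I2) := by
    calc I1 = ∑ i : Fin 3, ∑ j : Fin 3, ∫ x, (P v i j x) ^ 2 * grad2 v x := step1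
      _ ≤ _ := Finset.sum_le_sum fun i _ => Finset.sum_le_sum fun j _ => by
          rw [ibp hv hvs i j]; exact hIJ i j
  have step3 : I1 ≤ (1/2) * I1 + (29241/2) * I2 := by
    refine step2.trans_eq ?_
    simp [Finset.sum_const, Finset.card_univ]
    ring
  linarith

end GFPB

/-- there is an absolute constant C > 0 such that for every C² compactly
supported v : ℝ³ → ℝ³, ∫ |∇v|⁴ ≤ C ∫ |v|² |∇²v|². -/
theorem grad_fourth_power_bound :
    ∃ C : ℝ, 0 < C ∧ ∀ v : E3 → E3, ContDiff ℝ 2 v → HasCompactSupport v →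
      ∫ x, (grad2 v x) ^ 2 ≤ C * ∫ x, ‖v x‖ ^ 2 * hess2 v x :=
  GFPB.main

end
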